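/- Let d ≥ 1 and r ≥ 1 be integers and let n = d + r. Let M be the n×n real matrix (indices 1,…,n) with M_{ij} = min(i,j) for i, j ≤ d; M_{ij} = 1 whenever exactly one of i, j exceeds d; M_{ij} = 1 for i ≠ j with both i, j > d; and M_{ii} = 2 for i > d. Let Q be the n×n real matrix with Q_{ij} = min(i,j) for i, j ≤ d with (i,j) ≠ (d,d), Q_{dd} = d + r; Q_{ij} = 1 if exactly one of i, j exceeds d and the other equals d, or if i = j > d; and Q_{ij} = 0 otherwise. (M and Q are, respectively, the bottleneck matrix and the neckbottle matrix of the rooted broom B_1(d,r).) Let 1 denote the all-ones vector of size n. Then 1ᵀM³1 = V_1(d,r), 1ᵀM²1 = V_2(d,r), 1ᵀQ³1 = U_1(d,r), and 1ᵀQ²1 = U_2(d,r), where: U_1(d,r) = 4r³ + 2(d² + 3d + 4)r² + (1/12)(13d⁴ + 26d³ + 41d² + 28d + 48)r + (1/2520)d(d+1)(2d+1)(68d⁴ + 136d³ + 133d² + 65d + 18); U_2(d,r) = 4r² + 2(d² + d + 2)r + (1/30)d(d+1)(2d+1)(2d² + 2d + 1); V_1(d,r) = r⁴ + (4d + 3)r³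 + (1/2)(2d+3)(d+2)(d+1)r² + (1/15)(d+1)(4d⁴ + 16d³ + 19d² + 21d + 15)r + (1/2520)d(2d+1)(d+1)(68d⁴ + 136d³ + 133d² + 65d + 18); V_2(d,r) = r³ + (3d + 2)r² + (1/3)(d+1)(2d² + 4d + 3)r + (1/30)d(2d+1)(d+1)(2d² + 2d + 1). -/

import Mathlib

open Matrix

/-- The bottleneck matrix of the rooted broom `B₁(d,r)` (path on `d` vertices with `r` pendent
vertices attached to one end-vertex, rooted at the attachment vertex), with vertex `i`
(1-based) represented by `⟨i-1⟩ : Fin (d+r)`: `min(i,j)` for `i, j ≤ d`, `1` if exactly one of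
`i, j` exceeds `d`, `1` off the diagonal when both exceed `d`, and `2` on the diagonal when
`i > d`. -/
def broomB1Bottleneck (d r : ℕ) : Matrix (Fin (d + r)) (Fin (d + r)) ℝ := fun i j =>
  if (i : ℕ) < d ∧ (j : ℕ) < d then ((min ((i : ℕ) + 1) ((j : ℕ) + 1) : ℕ) : ℝ)
  else if (i : ℕ) = (j : ℕ) then 2
  else 1

/-- The neckbottle matrix `Q = NNᵀ` of the rooted broom `B₁(d,r)` (with `N` its path matrix):
`min(i,j)` for `i, j ≤ d` with `(i,j) ≠ (d,d)`, `Q_{dd} = d + r`, `1` if exactly one of `i, j`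
exceeds `d` and the other equals `d`, `1` on the diagonal for `i = j > d`, and `0`
otherwise. -/
def broomB1Neckbottle (d r : ℕ) : Matrix (Fin (d + r)) (Fin (d + r)) ℝ := fun i j =>
  if (i : ℕ) < d ∧ (j : ℕ) < d then
    (if (i : ℕ) + 1 = d ∧ (j : ℕ) + 1 = d then ((d : ℝ) + r)
     else ((min ((i : ℕ) + 1) ((j : ℕ) + 1) : ℕ) : ℝ))
  else if (i : ℕ) = (j : ℕ) then 1
  else if (i : ℕ) + 1 = d ∨ (j : ℕ) + 1 = d then 1
  else 0

open Finset

noncomputable def gP (d x : ℝ) : ℝ := (x + 1) * (2 * d - x) / 2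

noncomputable def hP (d c x : ℝ) : ℝ :=
  (-1/12) * x + (-1/24) * x^2 + (1/12) * x^3 + (1/24) * x^4 + (-1/2) * c * x
  + (-1/2) * c * x^2 + (1/6) * d + (-1/6) * d * x + (-1/2) * d * x^2 + (-1/6) * d * x^3
  + d * c + d * c * x + (1/2) * d^2 + (1/2) * d^2 * x + (1/3) * d^3 + (1/3) * d^3 * x

noncomputable def P0e (d c x : ℝ) : ℝ :=
  (1/6) * x + (-1/6) * x^3 + c * x + (1/2) * d * x + (1/2) * d * x^2

noncomputable def P1e (d c x : ℝ) : ℝ :=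
  (1/12) * x + (1/8) * x^2 + (-1/12) * x^3 + (-1/8) * x^4 + (1/2) * c * x
  + (1/2) * c * x^2 + (1/6) * d * x + (1/2) * d * x^2 + (1/3) * d * x^3

noncomputable def P2e (d c x : ℝ) : ℝ :=
  (1/30) * x + (-1/12) * x^3 + (1/20) * x^5 + (1/3) * c * x + (-1/3) * c * x^3
  + c^2 * x + (1/6) * d * x + (1/4) * d * x^2 + (-1/6) * d * x^3 + (-1/4) * d * x^4
  + d * c * x + d * c * x^2 + (1/6) * d^2 * x + (1/2) * d^2 * x^2 + (1/3) * d^2 * x^3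

noncomputable def PFe (d c a b x : ℝ) : ℝ :=
  (1/140) * x + (-1/48) * x^3 + (1/60) * x^5 + (-1/336) * x^7 + (1/6) * b * x
  + (-1/6) * b * x^3 + (1/12) * a * x + (1/8) * a * x^2 + (-1/12) * a * x^3
  + (-1/8) * a * x^4 + (1/15) * c * x + (-1/8) * c * x^3 + (7/120) * c * x^5
  + c * b * x + (1/2) * c * a * x + (1/2) * c * a * x^2 + (1/6) * c^2 * x
  + (-1/6) * c^2 * x^3 + (17/360) * d * x + (1/16) * d * x^2 + (-11/144) * d * x^3
  + (-1/12) * d * x^4 + (7/240) * d * x^5 + (1/48) * d * x^6 + (1/2) * d * b * x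
  + (1/2) * d * b * x^2 + (1/6) * d * a * x + (1/2) * d * a * x^2 + (1/3) * d * a * x^3
  + (1/3) * d * c * x + (3/8) * d * c * x^2 + (-1/4) * d * c * x^3 + (-7/24) * d * c * x^4
  + (1/2) * d * c^2 * x + (1/2) * d * c^2 * x^2 + (37/360) * d^2 * x + (11/48) * d^2 * x^2
  + (1/72) * d^2 * x^3 + (-7/48) * d^2 * x^4 + (-1/30) * d^2 * x^5 + (5/12) * d^2 * c * x
  + (3/4) * d^2 * c * x^2 + (1/3) * d^2 * c * x^3 + (1/9) * d^3 * x + (7/24) * d^3 * x^2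
  + (5/36) * d^3 * x^3 + (-1/24) * d^3 * x^4 + (1/6) * d^3 * c * x + (1/6) * d^3 * c * x^2
  + (1/18) * d^4 * x + (1/6) * d^4 * x^2 + (1/9) * d^4 * x^3

lemma sum_j1 (n : ℕ) : ∑ j ∈ range n, ((j : ℝ) + 1) = n * ((n : ℝ) + 1) / 2 := by
  induction n with
  | zero => simp
  | succ n ih => rw [Finset.sum_range_succ, ih]; push_cast; ring

lemma sum_w (d c : ℝ) (n : ℕ) : ∑ j ∈ range n, (gP d j + c) = P0e d c n := by
  induction n with
  | zero => simp [P0e]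
  | succ n ih => rw [Finset.sum_range_succ, ih]; simp only [gP, P0e]; push_cast; ring

lemma sum_jw (d c : ℝ) (n : ℕ) :
    ∑ j ∈ range n, ((j : ℝ) + 1) * (gP d j + c) = P1e d c n := by
  induction n with
  | zero => simp [P1e]
  | succ n ih => rw [Finset.sum_range_succ, ih]; simp only [gP, P1e]; push_cast; ring

lemma sum_w2 (d c : ℝ) (n : ℕ) :
    ∑ j ∈ range n, (gP d j + c) * (gP d j + c) = P2e d c n := by
  induction n with
  | zero => simp [P2e]
  | succ n ih => rw [Finset.sum_range_succ, ih]; simp only [gP, P2e]; push_cast; ring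

lemma sum_final (d c a b : ℝ) (n : ℕ) :
    ∑ j ∈ range n, (gP d j + c) * (hP d c j + a * ((j : ℝ) + 1) + b) = PFe d c a b n := by
  induction n with
  | zero => simp [PFe]
  | succ n ih => rw [Finset.sum_range_succ, ih]; simp only [gP, hP, PFe]; push_cast; ring

lemma minsum_w (d : ℕ) (c : ℝ) (i : ℕ) (hi : i < d) :
    ∑ j ∈ range d, ((min (i + 1) (j + 1) : ℕ) : ℝ) * (gP d j + c) = hP d c i := by
  have h1 : i + 1 ≤ d := hi
  rw [Finset.range_eq_Ico, ← Finset.sum_Ico_consecutive _ (Nat.zero_le (i + 1)) h1,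
    ← Finset.range_eq_Ico]
  have e1 : ∑ j ∈ range (i + 1), ((min (i + 1) (j + 1) : ℕ) : ℝ) * (gP d j + c)
      = ∑ j ∈ range (i + 1), ((j : ℝ) + 1) * (gP d j + c) := by
    refine Finset.sum_congr rfl fun j hj => ?_
    have := Finset.mem_range.mp hj
    rw [min_eq_right (by omega)]; push_cast; ring
  have e2 : ∑ j ∈ Ico (i + 1) d, ((min (i + 1) (j + 1) : ℕ) : ℝ) * (gP d j + c)
      = ((i : ℝ) + 1) * ∑ j ∈ Ico (i + 1) d, (gP d j + c) := by
    rw [Finset.mul_sum]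
    refine Finset.sum_congr rfl fun j hj => ?_
    have := (Finset.mem_Ico.mp hj).1
    rw [min_eq_left (by omega)]; push_cast; ring
  rw [e1, e2, Finset.sum_Ico_eq_sub _ h1, sum_jw, sum_w, sum_w]
  simp only [hP, P1e, P0e]; push_cast; ring

lemma minsum_const (d : ℕ) (i : ℕ) (hi : i < d) :
    ∑ j ∈ range d, ((min (i + 1) (j + 1) : ℕ) : ℝ) = gP d i := by
  have h1 : i + 1 ≤ d := hi
  rw [Finset.range_eq_Ico, ← Finset.sum_Ico_consecutive _ (Nat.zero_le (i + 1)) h1,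
    ← Finset.range_eq_Ico]
  have e1 : ∑ j ∈ range (i + 1), ((min (i + 1) (j + 1) : ℕ) : ℝ)
      = ∑ j ∈ range (i + 1), ((j : ℝ) + 1) := by
    refine Finset.sum_congr rfl fun j hj => ?_
    have := Finset.mem_range.mp hj
    rw [min_eq_right (by omega)]; push_cast; ring
  have e2a : ∑ j ∈ Ico (i + 1) d, ((min (i + 1) (j + 1) : ℕ) : ℝ)
      = ∑ _j ∈ Ico (i + 1) d, ((i + 1 : ℕ) : ℝ) := by
    refine Finset.sum_congr rfl fun j hj => ?_
    have := (Finset.mem_Ico.mp hj).1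
    rw [min_eq_left (by omega)]
  have e2 : ∑ j ∈ Ico (i + 1) d, ((min (i + 1) (j + 1) : ℕ) : ℝ)
      = ((d : ℝ) - ((i : ℝ) + 1)) * ((i : ℝ) + 1) := by
    rw [e2a, Finset.sum_const, Nat.card_Ico, nsmul_eq_mul, Nat.cast_sub h1]
    push_cast; ring
  rw [e1, e2, sum_j1]
  simp only [gP]; push_cast; ring

noncomputable def fM (d r : ℕ) (i j : ℕ) : ℝ :=
  if i < d ∧ j < d then ((min (i + 1) (j + 1) : ℕ) : ℝ) else if i = j then 2 else 1

noncomputable def fQ (d r : ℕ) (i j : ℕ) : ℝ :=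
  if i < d ∧ j < d then
    (if i + 1 = d ∧ j + 1 = d then ((d : ℝ) + r)
     else ((min (i + 1) (j + 1) : ℕ) : ℝ))
  else if i = j then 1
  else if i + 1 = d ∨ j + 1 = d then 1
  else 0

noncomputable def sfun (d r : ℕ) (i : ℕ) : ℝ :=
  if i < d then gP d i + r else (d : ℝ) + r + 1

noncomputable def wfun (d r : ℕ) (i : ℕ) : ℝ :=
  if i < d then hP d r i + r * ((d : ℝ) + r + 1)
  else P0e d r d + ((r : ℝ) + 1) * ((d : ℝ) + r + 1)

noncomputable def ufun (d r : ℕ) (i : ℕ) : ℝ :=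
  if i < d then gP d i + (if i + 1 = d then 2 * (r : ℝ) else 0) else 2

noncomputable def wqfun (d r : ℕ) (i : ℕ) : ℝ :=
  if i < d then
    (if i + 1 = d then
      P1e d 0 ((d : ℝ) - 1) + ((d : ℝ) + r) * (gP d ((d : ℝ) - 1) + 2 * r) + 2 * r
     else hP d 0 i + 2 * r * ((i : ℝ) + 1))
  else gP d ((d : ℝ) - 1) + 2 * r + 2

lemma mulVec_pt {n : ℕ} (A : Matrix (Fin n) (Fin n) ℝ) (f : ℕ → ℕ → ℝ)
    (hA : ∀ i j : Fin n, A i j = f i j) (w : Fin n → ℝ) (wf : ℕ → ℝ)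
    (hw : ∀ j : Fin n, w j = wf j) (i : Fin n) :
    A.mulVec w i = ∑ j ∈ Finset.range n, f i j * wf j := by
  simp only [Matrix.mulVec, dotProduct, hA, hw]
  exact Fin.sum_univ_eq_sum_range (fun j => f i j * wf j) n

lemma one_dot {n : ℕ} (A : Matrix (Fin n) (Fin n) ℝ) (f : ℕ → ℕ → ℝ)
    (hA : ∀ i j : Fin n, A i j = f i j)
    (hsymm : ∀ i j : ℕ, f i j = f j i)
    (w : Fin n → ℝ) (wf : ℕ → ℝ) (hw : ∀ j : Fin n, w j = wf j)
    (s : ℕ → ℝ) (hrow : ∀ i, i < n → ∑ j ∈ Finset.range n, f i j * 1 = s i) :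
    (1 : Fin n → ℝ) ⬝ᵥ A.mulVec w = ∑ j ∈ Finset.range n, s j * wf j := by
  have h1 : (1 : Fin n → ℝ) ⬝ᵥ A.mulVec w
      = ∑ i : Fin n, ∑ j ∈ Finset.range n, f i j * wf j := by
    simp only [dotProduct, Pi.one_apply, one_mul]
    exact Finset.sum_congr rfl fun i _ => mulVec_pt A f hA w wf hw i
  rw [h1, Fin.sum_univ_eq_sum_range (fun i => ∑ j ∈ Finset.range n, f i j * wf j) n,
    Finset.sum_comm]
  refine Finset.sum_congr rfl fun j hj => ?_
  rw [← Finset.sum_mul]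
  have h2 : ∑ i ∈ Finset.range n, f i j = s j := by
    rw [Finset.sum_congr rfl fun i _ => hsymm i j]
    simpa [mul_one] using hrow j (Finset.mem_range.mp hj)
  rw [h2]

lemma fM_symm (d r i j : ℕ) : fM d r i j = fM d r j i := by
  unfold fM
  split_ifs <;> first | rfl | exact congrArg _ (Nat.min_comm _ _) | omega | (exfalso; omega)

lemma fQ_symm (d r i j : ℕ) : fQ d r i j = fQ d r j i := by
  unfold fQ
  split_ifs <;> first | rfl | exact congrArg _ (Nat.min_comm _ _) | omega | (exfalso; omega)

lemma rowM (d r : ℕ) (hd : 1 ≤ d) :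
    ∀ i, i < d + r → ∑ j ∈ range (d + r), fM d r i j * 1 = sfun d r i := by
  intro i hi
  simp only [mul_one]
  rw [Finset.sum_range_add]
  by_cases h : i < d
  · have hhead : ∑ j ∈ range d, fM d r i j = ∑ j ∈ range d, ((min (i + 1) (j + 1) : ℕ) : ℝ) :=
      Finset.sum_congr rfl fun j hj => by
        simp only [fM]; rw [if_pos ⟨h, Finset.mem_range.mp hj⟩]
    have htail : ∑ k ∈ range r, fM d r i (d + k) = ∑ _k ∈ range r, (1 : ℝ) :=
      Finset.sum_congr rfl fun k hk => by
        simp only [fM]; rw [if_neg (by omega), if_neg (by omega)]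
    rw [hhead, htail, minsum_const d i h, Finset.sum_const, Finset.card_range, nsmul_eq_mul,
      mul_one, sfun, if_pos h]
  · obtain ⟨m, hm, rfl⟩ : ∃ m, m < r ∧ i = d + m := ⟨i - d, by omega, by omega⟩
    have hhead : ∑ j ∈ range d, fM d r (d + m) j = ∑ _j ∈ range d, (1 : ℝ) :=
      Finset.sum_congr rfl fun j hj => by
        have hj' := Finset.mem_range.mp hj
        simp only [fM]
        rw [if_neg (show ¬(d + m < d ∧ j < d) by omega), if_neg (show ¬(d + m = j) by omega)]
    have htail : ∑ k ∈ range r, fM d r (d + m) (d + k)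
        = ∑ k ∈ range r, ((1 : ℝ) + if k = m then 1 else 0) :=
      Finset.sum_congr rfl fun k hk => by
        simp only [fM]; rw [if_neg (by omega)]
        by_cases hkm : k = m
        · subst hkm; rw [if_pos rfl, if_pos rfl]; norm_num
        · rw [if_neg (by omega), if_neg hkm]; norm_num
    rw [hhead, htail, Finset.sum_add_distrib, Finset.sum_const, Finset.sum_const,
      Finset.sum_ite_eq' (range r) m (fun _ => (1 : ℝ)),
      if_pos (Finset.mem_range.mpr hm), sfun, if_neg (by omega)]
    simp only [Finset.card_range]; push_cast; ring

lemma rowMw (d r : ℕ) (hd : 1 ≤ d) :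
    ∀ i, i < d + r → ∑ j ∈ range (d + r), fM d r i j * sfun d r j = wfun d r i := by
  intro i hi
  rw [Finset.sum_range_add]
  by_cases h : i < d
  · have hhead : ∑ j ∈ range d, fM d r i j * sfun d r j
        = ∑ j ∈ range d, ((min (i + 1) (j + 1) : ℕ) : ℝ) * (gP d j + r) :=
      Finset.sum_congr rfl fun j hj => by
        simp only [fM, sfun]
        rw [if_pos ⟨h, Finset.mem_range.mp hj⟩, if_pos (Finset.mem_range.mp hj)]
    have htail : ∑ k ∈ range r, fM d r i (d + k) * sfun d r (d + k)
        = ∑ _k ∈ range r, ((d : ℝ) + r + 1) :=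
      Finset.sum_congr rfl fun k hk => by
        simp only [fM, sfun]
        rw [if_neg (by omega), if_neg (by omega), if_neg (by omega), one_mul]
    rw [hhead, htail, minsum_w d r i h, Finset.sum_const, Finset.card_range, nsmul_eq_mul,
      wfun, if_pos h]
  · obtain ⟨m, hm, rfl⟩ : ∃ m, m < r ∧ i = d + m := ⟨i - d, by omega, by omega⟩
    have hhead : ∑ j ∈ range d, fM d r (d + m) j * sfun d r j
        = ∑ j ∈ range d, (gP d j + r) :=
      Finset.sum_congr rfl fun j hj => by
        simp only [fM, sfun]
        have hj' := Finset.mem_range.mp hj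
        rw [if_neg (show ¬(d + m < d ∧ j < d) by omega), if_neg (show ¬(d + m = j) by omega),
          if_pos hj', one_mul]
    have htail : ∑ k ∈ range r, fM d r (d + m) (d + k) * sfun d r (d + k)
        = ∑ k ∈ range r, (((d : ℝ) + r + 1) + if k = m then ((d : ℝ) + r + 1) else 0) :=
      Finset.sum_congr rfl fun k hk => by
        simp only [fM, sfun]
        rw [if_neg (show ¬(d + m < d ∧ d + k < d) by omega),
          if_neg (show ¬(d + k < d) by omega)]
        by_cases hkm : k = m
        · subst hkm; rw [if_pos rfl, if_pos rfl]; ring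
        · rw [if_neg (show ¬(d + m = d + k) by omega), if_neg hkm]; ring
    rw [hhead, htail, sum_w, Finset.sum_add_distrib, Finset.sum_const,
      Finset.sum_ite_eq' (range r) m (fun _ => ((d : ℝ) + r + 1)),
      if_pos (Finset.mem_range.mpr hm), Finset.card_range, nsmul_eq_mul,
      wfun, if_neg (by omega)]
    push_cast; ring

lemma rowQ (d r : ℕ) (hd : 1 ≤ d) :
    ∀ i, i < d + r → ∑ j ∈ range (d + r), fQ d r i j * 1 = ufun d r i := by
  obtain ⟨e, rfl⟩ : ∃ e, d = e + 1 := ⟨d - 1, by omega⟩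
  intro i hi
  simp only [mul_one]
  rw [Finset.sum_range_add]
  by_cases h : i < e + 1
  · by_cases he : i = e
    · subst he
      rw [Finset.sum_range_succ]
      have hhead : ∑ j ∈ range i, fQ (i + 1) r i j = ∑ j ∈ range i, ((j : ℝ) + 1) :=
        Finset.sum_congr rfl fun j hj => by
          have hj' := Finset.mem_range.mp hj
          unfold fQ
          rw [if_pos ⟨h, by omega⟩, if_neg (show ¬(i + 1 = i + 1 ∧ j + 1 = i + 1) by omega),
            min_eq_right (by omega)]
          push_cast; ring
      have hee : fQ (i + 1) r i i = ((i : ℝ) + 1) + r := by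
        unfold fQ
        rw [if_pos ⟨h, h⟩, if_pos ⟨rfl, rfl⟩]
        push_cast; ring
      have htail : ∑ k ∈ range r, fQ (i + 1) r i (i + 1 + k) = ∑ _k ∈ range r, (1 : ℝ) :=
        Finset.sum_congr rfl fun k hk => by
          unfold fQ
          rw [if_neg (show ¬(i < i + 1 ∧ i + 1 + k < i + 1) by omega),
            if_neg (show ¬(i = i + 1 + k) by omega), if_pos (Or.inl rfl)]
      rw [hhead, hee, htail, sum_j1, Finset.sum_const, Finset.card_range, nsmul_eq_mul, mul_one,
        ufun, if_pos h, if_pos rfl]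
      simp only [gP]; push_cast; ring
    · have hhead : ∑ j ∈ range (e + 1), fQ (e + 1) r i j
          = ∑ j ∈ range (e + 1), ((min (i + 1) (j + 1) : ℕ) : ℝ) :=
        Finset.sum_congr rfl fun j hj => by
          have hj' := Finset.mem_range.mp hj
          simp only [fQ]
          rw [if_pos ⟨h, hj'⟩, if_neg (show ¬(i + 1 = e + 1 ∧ j + 1 = e + 1) by omega)]
      have htail : ∑ k ∈ range r, fQ (e + 1) r i (e + 1 + k) = ∑ _k ∈ range r, (0 : ℝ) :=
        Finset.sum_congr rfl fun k hk => by
          simp only [fQ]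
          rw [if_neg (show ¬(i < e + 1 ∧ e + 1 + k < e + 1) by omega),
            if_neg (show ¬(i = e + 1 + k) by omega),
            if_neg (show ¬(i + 1 = e + 1 ∨ e + 1 + k + 1 = e + 1) by omega)]
      rw [hhead, htail, minsum_const (e + 1) i h, Finset.sum_const, smul_zero,
        ufun, if_pos h, if_neg (show ¬(i + 1 = e + 1) by omega)]
  · obtain ⟨m, hm, rfl⟩ : ∃ m, m < r ∧ i = (e + 1) + m := ⟨i - (e + 1), by omega, by omega⟩
    have hhead : ∑ j ∈ range (e + 1), fQ (e + 1) r (e + 1 + m) j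
        = ∑ j ∈ range (e + 1), (if j = e then (1 : ℝ) else 0) :=
      Finset.sum_congr rfl fun j hj => by
        have hj' := Finset.mem_range.mp hj
        simp only [fQ]
        rw [if_neg (show ¬(e + 1 + m < e + 1 ∧ j < e + 1) by omega),
          if_neg (show ¬(e + 1 + m = j) by omega)]
        by_cases hje : j = e
        · rw [if_pos (Or.inr (by omega)), if_pos hje]
        · rw [if_neg (show ¬(e + 1 + m + 1 = e + 1 ∨ j + 1 = e + 1) by omega), if_neg hje]
    have htail : ∑ k ∈ range r, fQ (e + 1) r (e + 1 + m) (e + 1 + k)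
        = ∑ k ∈ range r, (if k = m then (1 : ℝ) else 0) :=
      Finset.sum_congr rfl fun k hk => by
        simp only [fQ]
        rw [if_neg (show ¬(e + 1 + m < e + 1 ∧ e + 1 + k < e + 1) by omega)]
        by_cases hkm : k = m
        · subst hkm; rw [if_pos rfl, if_pos rfl]
        · rw [if_neg (show ¬(e + 1 + m = e + 1 + k) by omega),
            if_neg (show ¬(e + 1 + m + 1 = e + 1 ∨ e + 1 + k + 1 = e + 1) by omega),
            if_neg hkm]
    rw [hhead, htail, Finset.sum_ite_eq' (range (e + 1)) e (fun _ => (1 : ℝ)),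
      Finset.sum_ite_eq' (range r) m (fun _ => (1 : ℝ)),
      if_pos (Finset.mem_range.mpr (by omega)), if_pos (Finset.mem_range.mpr hm),
      ufun, if_neg (show ¬(e + 1 + m < e + 1) by omega)]
    norm_num

lemma rowQu (d r : ℕ) (hd : 1 ≤ d) :
    ∀ i, i < d + r → ∑ j ∈ range (d + r), fQ d r i j * ufun d r j = wqfun d r i := by
  obtain ⟨e, rfl⟩ : ∃ e, d = e + 1 := ⟨d - 1, by omega⟩
  intro i hi
  rw [Finset.sum_range_add]
  by_cases h : i < e + 1
  · by_cases he : i = e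
    · subst he
      rw [Finset.sum_range_succ]
      have hhead : ∑ j ∈ range i, fQ (i + 1) r i j * ufun (i + 1) r j
          = ∑ j ∈ range i, ((j : ℝ) + 1) * (gP ((i + 1 : ℕ) : ℝ) j + 0) :=
        Finset.sum_congr rfl fun j hj => by
          have hj' := Finset.mem_range.mp hj
          unfold fQ ufun
          rw [if_pos ⟨h, by omega⟩, if_neg (show ¬(i + 1 = i + 1 ∧ j + 1 = i + 1) by omega),
            min_eq_right (by omega), if_pos (show j < i + 1 by omega),
            if_neg (show ¬(j + 1 = i + 1) by omega)]
          push_cast; ring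
      have hee : fQ (i + 1) r i i * ufun (i + 1) r i
          = (((i : ℝ) + 1) + r) * (gP ((i + 1 : ℕ) : ℝ) i + 2 * r) := by
        unfold fQ ufun
        rw [if_pos ⟨h, h⟩, if_pos ⟨rfl, rfl⟩, if_pos h, if_pos rfl]
        push_cast; ring
      have htail : ∑ k ∈ range r, fQ (i + 1) r i (i + 1 + k) * ufun (i + 1) r (i + 1 + k)
          = ∑ _k ∈ range r, (2 : ℝ) :=
        Finset.sum_congr rfl fun k hk => by
          unfold fQ ufun
          rw [if_neg (show ¬(i < i + 1 ∧ i + 1 + k < i + 1) by omega),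
            if_neg (show ¬(i = i + 1 + k) by omega), if_pos (Or.inl rfl),
            if_neg (show ¬(i + 1 + k < i + 1) by omega), one_mul]
      rw [hhead, hee, htail, sum_jw, Finset.sum_const, Finset.card_range, nsmul_eq_mul,
        wqfun, if_pos h, if_pos rfl]
      simp only [gP, P1e]; push_cast; ring
    · have hhead : ∑ j ∈ range (e + 1), fQ (e + 1) r i j * ufun (e + 1) r j
          = ∑ j ∈ range (e + 1), (((min (i + 1) (j + 1) : ℕ) : ℝ) * (gP ((e + 1 : ℕ) : ℝ) j + 0)
              + (if j = e then ((min (i + 1) (j + 1) : ℕ) : ℝ) * (2 * (r : ℝ)) else 0)) :=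
        Finset.sum_congr rfl fun j hj => by
          have hj' := Finset.mem_range.mp hj
          simp only [fQ, ufun]
          rw [if_pos ⟨h, hj'⟩, if_neg (show ¬(i + 1 = e + 1 ∧ j + 1 = e + 1) by omega),
            if_pos hj']
          by_cases hje : j = e
          · subst hje
            rw [if_pos rfl, if_pos rfl]; ring
          · rw [if_neg (show ¬(j + 1 = e + 1) by omega), if_neg hje]; ring
      have htail : ∑ k ∈ range r, fQ (e + 1) r i (e + 1 + k) * ufun (e + 1) r (e + 1 + k)
          = ∑ _k ∈ range r, (0 : ℝ) :=
        Finset.sum_congr rfl fun k hk => by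
          simp only [fQ]
          rw [if_neg (show ¬(i < e + 1 ∧ e + 1 + k < e + 1) by omega),
            if_neg (show ¬(i = e + 1 + k) by omega),
            if_neg (show ¬(i + 1 = e + 1 ∨ e + 1 + k + 1 = e + 1) by omega), zero_mul]
      rw [hhead, htail, Finset.sum_add_distrib, minsum_w (e + 1) 0 i h,
        Finset.sum_ite_eq' (range (e + 1)) e
          (fun j => ((min (i + 1) (j + 1) : ℕ) : ℝ) * (2 * (r : ℝ))),
        if_pos (Finset.mem_range.mpr (by omega)), min_eq_left (by omega),
        Finset.sum_const, smul_zero, wqfun, if_pos h,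
        if_neg (show ¬(i + 1 = e + 1) by omega)]
      push_cast; ring
  · obtain ⟨m, hm, rfl⟩ : ∃ m, m < r ∧ i = (e + 1) + m := ⟨i - (e + 1), by omega, by omega⟩
    have hhead : ∑ j ∈ range (e + 1), fQ (e + 1) r (e + 1 + m) j * ufun (e + 1) r j
        = ∑ j ∈ range (e + 1), (if j = e then gP ((e + 1 : ℕ) : ℝ) (e : ℕ) + 2 * (r : ℝ) else 0) :=
      Finset.sum_congr rfl fun j hj => by
        have hj' := Finset.mem_range.mp hj
        simp only [fQ, ufun]
        rw [if_neg (show ¬(e + 1 + m < e + 1 ∧ j < e + 1) by omega),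
          if_neg (show ¬(e + 1 + m = j) by omega)]
        by_cases hje : j = e
        · rw [if_pos (Or.inr (show j + 1 = e + 1 by omega)), if_pos (show j < e + 1 by omega),
            if_pos (show j + 1 = e + 1 by omega), if_pos hje, hje, one_mul]
        · rw [if_neg (show ¬(e + 1 + m + 1 = e + 1 ∨ j + 1 = e + 1) by omega), if_neg hje,
            zero_mul]
    have htail : ∑ k ∈ range r, fQ (e + 1) r (e + 1 + m) (e + 1 + k) * ufun (e + 1) r (e + 1 + k)
        = ∑ k ∈ range r, (if k = m then (2 : ℝ) else 0) :=
      Finset.sum_congr rfl fun k hk => by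
        simp only [fQ, ufun]
        rw [if_neg (show ¬(e + 1 + m < e + 1 ∧ e + 1 + k < e + 1) by omega),
          if_neg (show ¬(e + 1 + k < e + 1) by omega)]
        by_cases hkm : k = m
        · subst hkm; rw [if_pos rfl, if_pos rfl]; ring
        · rw [if_neg (show ¬(e + 1 + m = e + 1 + k) by omega),
            if_neg (show ¬(e + 1 + m + 1 = e + 1 ∨ e + 1 + k + 1 = e + 1) by omega),
            if_neg hkm, zero_mul]
    rw [hhead, htail,
      Finset.sum_ite_eq' (range (e + 1)) e (fun _ => gP ((e + 1 : ℕ) : ℝ) (e : ℕ) + 2 * (r : ℝ)),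
      Finset.sum_ite_eq' (range r) m (fun _ => (2 : ℝ)),
      if_pos (Finset.mem_range.mpr (by omega)), if_pos (Finset.mem_range.mpr hm),
      wqfun, if_neg (show ¬(e + 1 + m < e + 1) by omega)]
    simp only [gP]; push_cast; ring

/-- For the bottleneck matrix `M` and the neckbottle matrix `Q` of the
rooted broom `B₁(d,r)` and the all-ones vector `𝟙`, the quantities `𝟙ᵀM³𝟙`, `𝟙ᵀM²𝟙`, `𝟙ᵀQ³𝟙`
and `𝟙ᵀQ²𝟙` are given by the explicit polynomials `V₁(d,r)`, `V₂(d,r)`, `U₁(d,r)` and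
`U₂(d,r)` respectively. -/
theorem broomB1_moment_formulas (d r : ℕ) (hd : 1 ≤ d) (hr : 1 ≤ r) :
    ((1 : Fin (d + r) → ℝ) ⬝ᵥ (broomB1Bottleneck d r ^ 3).mulVec 1
        = (r : ℝ) ^ 4 + (4 * d + 3) * r ^ 3
          + (1 / 2) * (2 * d + 3) * (d + 2) * (d + 1) * r ^ 2
          + (1 / 15) * (d + 1) * (4 * (d : ℝ) ^ 4 + 16 * d ^ 3 + 19 * d ^ 2 + 21 * d + 15) * r
          + (1 / 2520) * d * (2 * d + 1) * (d + 1)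
              * (68 * (d : ℝ) ^ 4 + 136 * d ^ 3 + 133 * d ^ 2 + 65 * d + 18)) ∧
    ((1 : Fin (d + r) → ℝ) ⬝ᵥ (broomB1Bottleneck d r ^ 2).mulVec 1
        = (r : ℝ) ^ 3 + (3 * d + 2) * r ^ 2
          + (1 / 3) * (d + 1) * (2 * (d : ℝ) ^ 2 + 4 * d + 3) * r
          + (1 / 30) * d * (2 * d + 1) * (d + 1) * (2 * (d : ℝ) ^ 2 + 2 * d + 1)) ∧
    ((1 : Fin (d + r) → ℝ) ⬝ᵥ (broomB1Neckbottle d r ^ 3).mulVec 1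
        = 4 * (r : ℝ) ^ 3 + 2 * ((d : ℝ) ^ 2 + 3 * d + 4) * r ^ 2
          + (1 / 12) * (13 * (d : ℝ) ^ 4 + 26 * d ^ 3 + 41 * d ^ 2 + 28 * d + 48) * r
          + (1 / 2520) * d * (d + 1) * (2 * d + 1)
              * (68 * (d : ℝ) ^ 4 + 136 * d ^ 3 + 133 * d ^ 2 + 65 * d + 18)) ∧
    ((1 : Fin (d + r) → ℝ) ⬝ᵥ (broomB1Neckbottle d r ^ 2).mulVec 1
        = 4 * (r : ℝ) ^ 2 + 2 * ((d : ℝ) ^ 2 + d + 2) * r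
          + (1 / 30) * d * (d + 1) * (2 * d + 1) * (2 * (d : ℝ) ^ 2 + 2 * d + 1)) := by
  obtain ⟨e, rfl⟩ : ∃ e, d = e + 1 := ⟨d - 1, by omega⟩
  set d := e + 1 with hd_def
  have hAM : ∀ i j : Fin (d + r), broomB1Bottleneck d r i j = fM d r i j := fun i j => rfl
  have hAQ : ∀ i j : Fin (d + r), broomB1Neckbottle d r i j = fQ d r i j := fun i j => rfl
  have hs : (broomB1Bottleneck d r).mulVec 1 = fun i : Fin (d + r) => sfun d r i :=
    funext fun i => by
      rw [mulVec_pt (broomB1Bottleneck d r) (fM d r) hAM 1 (fun _ => (1 : ℝ)) (fun j => rfl) i]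
      exact rowM d r (by omega) i i.isLt
  have hw : (broomB1Bottleneck d r).mulVec (fun i : Fin (d + r) => sfun d r i)
      = fun i : Fin (d + r) => wfun d r i :=
    funext fun i => by
      rw [mulVec_pt (broomB1Bottleneck d r) (fM d r) hAM _ (sfun d r) (fun j => rfl) i]
      exact rowMw d r (by omega) i i.isLt
  have hu : (broomB1Neckbottle d r).mulVec 1 = fun i : Fin (d + r) => ufun d r i :=
    funext fun i => by
      rw [mulVec_pt (broomB1Neckbottle d r) (fQ d r) hAQ 1 (fun _ => (1 : ℝ)) (fun j => rfl) i]
      exact rowQ d r (by omega) i i.isLt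
  have hwq : (broomB1Neckbottle d r).mulVec (fun i : Fin (d + r) => ufun d r i)
      = fun i : Fin (d + r) => wqfun d r i :=
    funext fun i => by
      rw [mulVec_pt (broomB1Neckbottle d r) (fQ d r) hAQ _ (ufun d r) (fun j => rfl) i]
      exact rowQu d r (by omega) i i.isLt
  refine ⟨?_, ?_, ?_, ?_⟩
  · -- M³
    have h3 : (broomB1Bottleneck d r ^ 3).mulVec (1 : Fin (d + r) → ℝ)
        = (broomB1Bottleneck d r).mulVec ((broomB1Bottleneck d r).mulVec
            ((broomB1Bottleneck d r).mulVec 1)) := by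
      rw [pow_succ, pow_two, ← Matrix.mulVec_mulVec, ← Matrix.mulVec_mulVec]
    rw [h3, hs, hw,
      one_dot (broomB1Bottleneck d r) (fM d r) hAM (fM_symm d r) _ (wfun d r) (fun j => rfl)
        (sfun d r) (rowM d r (by omega))]
    rw [Finset.sum_range_add]
    have h1 : ∑ j ∈ range d, sfun d r j * wfun d r j
        = ∑ j ∈ range d, (gP d j + r) * (hP d r j + 0 * ((j : ℝ) + 1) + r * ((d : ℝ) + r + 1)) :=
      Finset.sum_congr rfl fun j hj => by
        have hj' := Finset.mem_range.mp hj
        simp only [sfun, wfun]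
        rw [if_pos hj', if_pos hj']
        ring
    have h2 : ∑ k ∈ range r, sfun d r (d + k) * wfun d r (d + k)
        = ∑ _k ∈ range r,
            ((d : ℝ) + r + 1) * (P0e d r d + ((r : ℝ) + 1) * ((d : ℝ) + r + 1)) :=
      Finset.sum_congr rfl fun k hk => by
        simp only [sfun, wfun]
        rw [if_neg (show ¬(d + k < d) by omega), if_neg (show ¬(d + k < d) by omega)]
    rw [h1, h2, sum_final d r 0 ((r : ℝ) * ((d : ℝ) + r + 1)) d, Finset.sum_const,
      Finset.card_range, nsmul_eq_mul]
    simp only [PFe, P0e, hd_def]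
    push_cast; ring
  · -- M²
    have h3 : (broomB1Bottleneck d r ^ 2).mulVec (1 : Fin (d + r) → ℝ)
        = (broomB1Bottleneck d r).mulVec ((broomB1Bottleneck d r).mulVec 1) := by
      rw [pow_two, ← Matrix.mulVec_mulVec]
    rw [h3, hs,
      one_dot (broomB1Bottleneck d r) (fM d r) hAM (fM_symm d r) _ (sfun d r) (fun j => rfl)
        (sfun d r) (rowM d r (by omega))]
    rw [Finset.sum_range_add]
    have h1 : ∑ j ∈ range d, sfun d r j * sfun d r j
        = ∑ j ∈ range d, (gP d j + r) * (gP d j + r) :=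
      Finset.sum_congr rfl fun j hj => by
        have hj' := Finset.mem_range.mp hj
        simp only [sfun]
        rw [if_pos hj']
    have h2 : ∑ k ∈ range r, sfun d r (d + k) * sfun d r (d + k)
        = ∑ _k ∈ range r, ((d : ℝ) + r + 1) * ((d : ℝ) + r + 1) :=
      Finset.sum_congr rfl fun k hk => by
        simp only [sfun]
        rw [if_neg (show ¬(d + k < d) by omega)]
    rw [h1, h2, sum_w2 d r d, Finset.sum_const, Finset.card_range, nsmul_eq_mul]
    simp only [P2e, hd_def]
    push_cast; ring
  · -- Q³
    have h3 : (broomB1Neckbottle d r ^ 3).mulVec (1 : Fin (d + r) → ℝ)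
        = (broomB1Neckbottle d r).mulVec ((broomB1Neckbottle d r).mulVec
            ((broomB1Neckbottle d r).mulVec 1)) := by
      rw [pow_succ, pow_two, ← Matrix.mulVec_mulVec, ← Matrix.mulVec_mulVec]
    rw [h3, hu, hwq,
      one_dot (broomB1Neckbottle d r) (fQ d r) hAQ (fQ_symm d r) _ (wqfun d r) (fun j => rfl)
        (ufun d r) (rowQ d r (by omega))]
    rw [Finset.sum_range_add, hd_def, Finset.sum_range_succ, ← hd_def]
    have h1 : ∑ j ∈ range e, ufun d r j * wqfun d r j
        = ∑ j ∈ range e, (gP d j + 0) * (hP d 0 j + 2 * (r : ℝ) * ((j : ℝ) + 1) + 0) :=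
      Finset.sum_congr rfl fun j hj => by
        have hj' := Finset.mem_range.mp hj
        simp only [ufun, wqfun]
        rw [if_pos (show j < d by omega), if_pos (show j < d by omega),
          if_neg (show ¬(j + 1 = d) by omega), if_neg (show ¬(j + 1 = d) by omega)]
        ring
    have h1e : ufun d r e * wqfun d r e
        = (gP d e + 2 * (r : ℝ))
          * (P1e d 0 ((d : ℝ) - 1) + ((d : ℝ) + r) * (gP d ((d : ℝ) - 1) + 2 * r) + 2 * r) := by
      simp only [ufun, wqfun]
      simp [show e < d by omega, show e + 1 = d by omega]
    have h2 : ∑ k ∈ range r, ufun d r (d + k) * wqfun d r (d + k)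
        = ∑ _k ∈ range r, (2 : ℝ) * (gP d ((d : ℝ) - 1) + 2 * r + 2) :=
      Finset.sum_congr rfl fun k hk => by
        simp only [ufun, wqfun]
        rw [if_neg (show ¬(d + k < d) by omega), if_neg (show ¬(d + k < d) by omega)]
    rw [h1, h1e, h2, sum_final d 0 (2 * (r : ℝ)) 0 e, Finset.sum_const, Finset.card_range,
      nsmul_eq_mul]
    simp only [PFe, P1e, gP, hd_def]
    push_cast; ring
  · -- Q²
    have h3 : (broomB1Neckbottle d r ^ 2).mulVec (1 : Fin (d + r) → ℝ)
        = (broomB1Neckbottle d r).mulVec ((broomB1Neckbottle d r).mulVec 1) := by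
      rw [pow_two, ← Matrix.mulVec_mulVec]
    rw [h3, hu,
      one_dot (broomB1Neckbottle d r) (fQ d r) hAQ (fQ_symm d r) _ (ufun d r) (fun j => rfl)
        (ufun d r) (rowQ d r (by omega))]
    rw [Finset.sum_range_add, hd_def, Finset.sum_range_succ, ← hd_def]
    have h1 : ∑ j ∈ range e, ufun d r j * ufun d r j
        = ∑ j ∈ range e, (gP d j + 0) * (gP d j + 0) :=
      Finset.sum_congr rfl fun j hj => by
        have hj' := Finset.mem_range.mp hj
        simp only [ufun]
        rw [if_pos (show j < d by omega), if_neg (show ¬(j + 1 = d) by omega)]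
    have h1e : ufun d r e * ufun d r e = (gP d e + 2 * (r : ℝ)) * (gP d e + 2 * (r : ℝ)) := by
      simp only [ufun]
      simp [show e < d by omega, show e + 1 = d by omega]
    have h2 : ∑ k ∈ range r, ufun d r (d + k) * ufun d r (d + k)
        = ∑ _k ∈ range r, (2 : ℝ) * 2 :=
      Finset.sum_congr rfl fun k hk => by
        simp only [ufun]
        rw [if_neg (show ¬(d + k < d) by omega)]
    rw [h1, h1e, h2, sum_w2 d 0 e, Finset.sum_const, Finset.card_range, nsmul_eq_mul]
    simp only [P2e, gP, hd_def]
    push_cast; ring
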